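/- The inverse Gamma density f satisfies the stationary Fokker–Planck equation λ d/dw[(w - m)f(w)] + (σ²/2) d²/dw²[w² f(w)] = 0 on (0,∞), when μ = 1 + 2λ/σ² and κ = (μ-1)m, i.e., f(w) = (κ^μ/Γ(μ)) e^{-κ/w} w^{-(1+μ)}. -/

import Mathlib

open Real

lemma hE' (κ a : ℝ) {v : ℝ} (hv : 0 < v) :
    HasDerivAt (fun v : ℝ => Real.exp (-κ/v) * v ^ a)
      (κ * (Real.exp (-κ/v) * v ^ (a-2)) + a * (Real.exp (-κ/v) * v ^ (a-1))) v := by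
  have h0 : HasDerivAt (fun v : ℝ => -κ/v) (κ / v^2) v := by
    have h := (hasDerivAt_inv hv.ne').const_mul (-κ)
    have hval : -κ * -(v^2)⁻¹ = κ / v^2 := by field_simp
    simpa [div_eq_mul_inv, hval] using h
  have h1 : HasDerivAt (fun v : ℝ => Real.exp (-κ/v)) (Real.exp (-κ/v) * (κ/v^2)) v := h0.exp
  have h2 : HasDerivAt (fun v : ℝ => v ^ a) (a * v ^ (a-1)) v :=
    Real.hasDerivAt_rpow_const (Or.inl hv.ne')
  have h3 := h1.mul h2
  refine HasDerivAt.congr_deriv h3 ?_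
  rw [Real.rpow_sub hv a 2, Real.rpow_two]
  ring

/-- the inverse Gamma density with μ = 1 + 2λ/σ², κ = (μ-1)m
solves the stationary Fokker–Planck equation
λ d/dw[(w-m)f(w)] + (σ²/2) d²/dw²[w²f(w)] = 0 on (0,∞). -/
theorem inverseGamma_stationary_FokkerPlanck
    (lam σ m : ℝ) (hlam : 0 < lam) (hσ : 0 < σ) (hm : 0 < m)
    (μ κ : ℝ) (hμ : μ = 1 + 2 * lam / σ ^ 2) (hκ : κ = (μ - 1) * m)
    (f : ℝ → ℝ)
    (hf : ∀ w : ℝ, 0 < w →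
      f w = κ ^ μ / Real.Gamma μ * Real.exp (-κ / w) / w ^ (1 + μ)) :
    ∀ w : ℝ, 0 < w →
      lam * deriv (fun v => (v - m) * f v) w
        + σ ^ 2 / 2 * deriv (deriv (fun v => v ^ 2 * f v)) w = 0 := by
  intro w hw
  set C : ℝ := κ ^ μ / Real.Gamma μ with hC
  have hfe : ∀ v ∈ Set.Ioi (0:ℝ), f v = C * (Real.exp (-κ/v) * v ^ (-(1+μ))) := by
    intro v hv
    rw [hf v hv, Real.rpow_neg hv.le]
    ring
  have hmemw : Set.Ioi (0:ℝ) ∈ nhds w := isOpen_Ioi.mem_nhds hw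
  -- Term 1
  have h1eq : ∀ v ∈ Set.Ioi (0:ℝ),
      (v - m) * f v = C * (Real.exp (-κ/v) * v ^ (-μ)) - (m*C) * (Real.exp (-κ/v) * v ^ (-(1+μ))) := by
    intro v hv
    rw [hfe v hv]
    have hpow : v * v ^ (-(1+μ)) = v ^ (-μ) := by
      rw [show (-μ : ℝ) = 1 + -(1+μ) by ring, Real.rpow_add hv, Real.rpow_one]
    linear_combination (C * Real.exp (-κ/v)) * hpow
  have hD1 : HasDerivAt
      (fun v => C * (Real.exp (-κ/v) * v ^ (-μ)) - (m*C) * (Real.exp (-κ/v) * v ^ (-(1+μ))))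
      (C * (κ * (Real.exp (-κ/w) * w ^ (-μ-2)) + (-μ) * (Real.exp (-κ/w) * w ^ (-μ-1)))
        - (m*C) * (κ * (Real.exp (-κ/w) * w ^ (-(1+μ)-2)) + (-(1+μ)) * (Real.exp (-κ/w) * w ^ (-(1+μ)-1)))) w :=
    (((hE' κ (-μ) hw).const_mul C).sub ((hE' κ (-(1+μ)) hw).const_mul (m*C)))
  have hT1 : deriv (fun v => (v - m) * f v) w
      = C * (κ * (Real.exp (-κ/w) * w ^ (-μ-2)) + (-μ) * (Real.exp (-κ/w) * w ^ (-μ-1)))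
        - (m*C) * (κ * (Real.exp (-κ/w) * w ^ (-(1+μ)-2)) + (-(1+μ)) * (Real.exp (-κ/w) * w ^ (-(1+μ)-1))) := by
    have heq : (fun v => (v - m) * f v) =ᶠ[nhds w]
        (fun v => C * (Real.exp (-κ/v) * v ^ (-μ)) - (m*C) * (Real.exp (-κ/v) * v ^ (-(1+μ)))) := by
      filter_upwards [hmemw] with v hv using h1eq v hv
    rw [heq.deriv_eq, hD1.deriv]
  -- Term 2
  have h2eq : ∀ v ∈ Set.Ioi (0:ℝ),
      v ^ 2 * f v = C * (Real.exp (-κ/v) * v ^ (1-μ)) := by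
    intro v hv
    rw [hfe v hv]
    have hpow : v ^ 2 * v ^ (-(1+μ)) = v ^ (1-μ) := by
      rw [show (1-μ : ℝ) = 2 + -(1+μ) by ring, Real.rpow_add hv, ← Real.rpow_two]
    linear_combination (C * Real.exp (-κ/v)) * hpow
  have hDfun : ∀ v ∈ Set.Ioi (0:ℝ), deriv (fun v => v ^ 2 * f v) v
      = (C*κ) * (Real.exp (-κ/v) * v ^ (-1-μ)) + (C*(1-μ)) * (Real.exp (-κ/v) * v ^ (-μ)) := by
    intro v hv
    have heq : (fun v => v ^ 2 * f v) =ᶠ[nhds v]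
        (fun v => C * (Real.exp (-κ/v) * v ^ (1-μ))) := by
      filter_upwards [isOpen_Ioi.mem_nhds hv] with u hu using h2eq u hu
    rw [heq.deriv_eq, ((hE' κ (1-μ) hv).const_mul C).deriv]
    rw [show (1-μ-2 : ℝ) = -1-μ by ring, show (1-μ-1 : ℝ) = -μ by ring]
    ring
  have hD2 : HasDerivAt
      (fun v => (C*κ) * (Real.exp (-κ/v) * v ^ (-1-μ)) + (C*(1-μ)) * (Real.exp (-κ/v) * v ^ (-μ)))
      ((C*κ) * (κ * (Real.exp (-κ/w) * w ^ (-1-μ-2)) + (-1-μ) * (Real.exp (-κ/w) * w ^ (-1-μ-1)))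
        + (C*(1-μ)) * (κ * (Real.exp (-κ/w) * w ^ (-μ-2)) + (-μ) * (Real.exp (-κ/w) * w ^ (-μ-1)))) w :=
    (((hE' κ (-1-μ) hw).const_mul (C*κ)).add ((hE' κ (-μ) hw).const_mul (C*(1-μ))))
  have hT2 : deriv (deriv (fun v => v ^ 2 * f v)) w
      = (C*κ) * (κ * (Real.exp (-κ/w) * w ^ (-1-μ-2)) + (-1-μ) * (Real.exp (-κ/w) * w ^ (-1-μ-1)))
        + (C*(1-μ)) * (κ * (Real.exp (-κ/w) * w ^ (-μ-2)) + (-μ) * (Real.exp (-κ/w) * w ^ (-μ-1))) := by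
    have heq : deriv (fun v => v ^ 2 * f v) =ᶠ[nhds w]
        (fun v => (C*κ) * (Real.exp (-κ/v) * v ^ (-1-μ)) + (C*(1-μ)) * (Real.exp (-κ/v) * v ^ (-μ))) := by
      filter_upwards [hmemw] with v hv using hDfun v hv
    rw [heq.deriv_eq, hD2.deriv]
  rw [hT1, hT2]
  -- normalize exponents to three canonical powers
  rw [show (-(1+μ)-2 : ℝ) = -1-μ-2 by ring, show (-(1+μ)-1 : ℝ) = -μ-2 by ring]
  set E := Real.exp (-κ/w)
  set p1 := w ^ (-1-μ-2 : ℝ)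
  set p2 := w ^ (-μ-2 : ℝ)
  set p3 := w ^ (-μ-1 : ℝ)
  rw [show (-1-μ-1 : ℝ) = -μ-2 by ring]
  have hlam2 : lam = (μ - 1) * σ ^ 2 / 2 := by
    rw [hμ]; field_simp; ring
  rw [hκ, hlam2]
  ring
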